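/- Let F and G be binary cluster families on the same finite set X (each is a finite family of nonempty subsets of X containing X and all singletons, any two members disjoint or nested, and every member with at least two elements the union of two disjoint nonempty members). Let U_P, V_P ∈ F be disjoint nonempty sets with U_P ∪ V_P = X, and let U_Q, V_Q ∈ G be disjoint nonempty sets with U_Q ∪ V_Q = X. Suppose a ∈ U_P ∩ U_Q, b ∈ U_P \ U_Q, and c ∈ X \ U_P. Then a, b, c are pairwise distinct, and the triple abc is a conflict of (F, G), i.e., for some labeling {x, y, z} = {a, b, c} there is a member of exactly one of F, G containing x and y but not z. -/
import Mathlib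


/-- A binary cluster family on ground set `X`: the family of clusters (leaf sets of
subtrees) of a rooted binary phylogenetic tree with leaf set `X`. -/
def IsBinaryClusterFamily {α : Type*} [DecidableEq α]
    (X : Finset α) (F : Finset (Finset α)) : Prop :=
  (∀ C ∈ F, C.Nonempty ∧ C ⊆ X) ∧
  X ∈ F ∧
  (∀ x ∈ X, ({x} : Finset α) ∈ F) ∧
  (∀ C ∈ F, ∀ D ∈ F, Disjoint C D ∨ C ⊆ D ∨ D ⊆ C) ∧
  (∀ C ∈ F, 2 ≤ C.card →
    ∃ C₁ ∈ F, ∃ C₂ ∈ F, C₁.Nonempty ∧ C₂.Nonempty ∧ Disjoint C₁ C₂ ∧ C = C₁ ∪ C₂)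

/-- The triple `xyz` is `xy`-biased in `F` (written `xy|_F z`): some member of `F`
contains `x` and `y` but not `z`. -/
def Biased {α : Type*} [DecidableEq α] (F : Finset (Finset α)) (x y z : α) : Prop :=
  ∃ C ∈ F, x ∈ C ∧ y ∈ C ∧ z ∉ C

/-- The triple `abc` is a conflict of `(F, G)`: for some labeling `{x,y,z} = {a,b,c}`,
the triple is `xy`-biased in exactly one of `F` and `G`. -/
def Conflict {α : Type*} [DecidableEq α] (F G : Finset (Finset α)) (a b c : α) : Prop :=
  ∃ x y z : α, ({x, y, z} : Finset α) = {a, b, c} ∧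
    Xor' (Biased F x y z) (Biased G x y z)

theorem listCommonRootConflicts_correct {α : Type*} [DecidableEq α]
    (X : Finset α) (F G : Finset (Finset α))
    (hF : IsBinaryClusterFamily X F) (hG : IsBinaryClusterFamily X G)
    (UP VP : Finset α) (hUP : UP ∈ F) (hVP : VP ∈ F)
    (hUPn : UP.Nonempty) (hVPn : VP.Nonempty) (hPd : Disjoint UP VP) (hPu : UP ∪ VP = X)
    (UQ VQ : Finset α) (hUQ : UQ ∈ G) (hVQ : VQ ∈ G)
    (hUQn : UQ.Nonempty) (hVQn : VQ.Nonempty) (hQd : Disjoint UQ VQ) (hQu : UQ ∪ VQ = X)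
    (a b c : α) (ha : a ∈ UP ∩ UQ) (hb : b ∈ UP \ UQ) (hc : c ∈ X \ UP) :
    (a ≠ b ∧ a ≠ c ∧ b ≠ c) ∧ Conflict F G a b c := by
  simp only [Finset.mem_inter, Finset.mem_sdiff] at ha hb hc
  obtain ⟨haP, haQ⟩ := ha
  obtain ⟨hbP, hbQ⟩ := hb
  obtain ⟨hcX, hcP⟩ := hc
  refine ⟨⟨?_, ?_, ?_⟩, ?_⟩
  · rintro rfl; exact hbQ haQ
  · rintro rfl; exact hcP haP
  · rintro rfl; exact hcP hbP
  by_cases hcQ : c ∈ UQ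
  · refine ⟨a, c, b, by ext x; simp [Finset.mem_insert]; tauto,
      Or.inr ⟨⟨UQ, hUQ, haQ, hcQ, hbQ⟩, ?_⟩⟩
    rintro ⟨C, hC, haC, hcC, hbC⟩
    rcases hF.2.2.2.1 C hC UP hUP with h | h | h
    · exact Finset.disjoint_left.mp h haC haP
    · exact hcP (h hcC)
    · exact hbC (h hbP)
  · refine ⟨a, b, c, rfl, Or.inl ⟨⟨UP, hUP, haP, hbP, hcP⟩, ?_⟩⟩
    rintro ⟨C, hC, haC, hbC, hcC⟩
    have hbV : b ∈ VQ := by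
      have : b ∈ UQ ∪ VQ := hQu ▸ (hPu ▸ Finset.mem_union_left VP hbP)
      simpa [Finset.mem_union, hbQ] using this
    have hcV : c ∈ VQ := by
      have : c ∈ UQ ∪ VQ := hQu ▸ hcX
      simpa [Finset.mem_union, hcQ] using this
    rcases hG.2.2.2.1 C hC VQ hVQ with h | h | h
    · exact Finset.disjoint_left.mp h hbC hbV
    · exact Finset.disjoint_left.mp hQd haQ (h haC)
    · exact hcC (h hcV)
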